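/- For every g : V → G and χ : L → Ĝ, the covariance relation U^g ∘ W^χ = (∏_{v ∈ V} ((∂ χ) v) (g v)) • (W^χ ∘ U^g) holds as an identity of linear maps on H. Equivalently, conjugating a Wilson line operator by a gauge transformation multiplies it by the value of its Gauss law syndrome ∂ χ on the gauge parameter g. -/
import Mathlib


open Finset

variable {V L : Type*} [Fintype V] [Fintype L] [DecidableEq V]
variable {G : Type*} [CommGroup G] [Fintype G]

/-- The gauge transformation `U^g` on the kinematical Hilbert space `(L → G) → ℂ`. -/
def Ugauge (s t : L → V) (g : V → G) : ((L → G) → ℂ) → ((L → G) → ℂ) :=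
  fun f a => f fun ℓ => (g (s ℓ))⁻¹ * a ℓ * g (t ℓ)

/-- The Wilson line (multiplication) operator `W^χ` for a family of characters `χ`. -/
def Wline (χ : L → (G →* ℂˣ)) : ((L → G) → ℂ) → ((L → G) → ℂ) :=
  fun f a => (((∏ ℓ, χ ℓ (a ℓ))⁻¹ : ℂˣ) : ℂ) • f a

/-- The Gauss law map `∂`, assigning to link character data the vertex charge it excites. -/
def gaussMap (s t : L → V) (χ : L → (G →* ℂˣ)) : V → (G →* ℂˣ) :=
  fun v => (∏ ℓ ∈ univ.filter fun ℓ => s ℓ = v, χ ℓ) *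
    ∏ ℓ ∈ univ.filter fun ℓ => t ℓ = v, (χ ℓ)⁻¹

lemma fiber_prod (u : L → V) (g : V → G) (χ : L → (G →* ℂˣ)) :
    ∏ v, ∏ ℓ ∈ univ.filter fun ℓ => u ℓ = v, χ ℓ (g v) = ∏ ℓ, χ ℓ (g (u ℓ)) := by
  rw [← Finset.prod_fiberwise (univ : Finset L) u (fun ℓ => χ ℓ (g (u ℓ)))]
  refine Finset.prod_congr rfl fun v _ => Finset.prod_congr rfl fun ℓ hℓ => ?_
  simp only [mem_filter] at hℓ
  rw [hℓ.2]

/-- Covariance of Wilson line operators under gauge transformations: conjugating `W^χ` by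
a gauge transformation `U^g` multiplies it by the value of its Gauss law syndrome `∂χ`
on the gauge parameter `g`. -/
theorem wilson_gauge_covariance (s t : L → V) (g : V → G) (χ : L → (G →* ℂˣ)) :
    Ugauge s t g ∘ Wline χ =
      (((∏ v, gaussMap s t χ v (g v)) : ℂˣ) : ℂ) • (Wline χ ∘ Ugauge s t g) := by
  funext f a
  have key : (∏ ℓ, χ ℓ ((g (s ℓ))⁻¹ * a ℓ * g (t ℓ)))⁻¹ =
      (∏ v, gaussMap s t χ v (g v)) * (∏ ℓ, χ ℓ (a ℓ))⁻¹ := by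
    have h1 : ∀ ℓ, χ ℓ ((g (s ℓ))⁻¹ * a ℓ * g (t ℓ)) =
        (χ ℓ (g (s ℓ)))⁻¹ * χ ℓ (a ℓ) * χ ℓ (g (t ℓ)) := by
      intro ℓ; simp [map_mul]
    have h2 : ∀ v, gaussMap s t χ v (g v) =
        (∏ ℓ ∈ univ.filter fun ℓ => s ℓ = v, χ ℓ (g v)) *
        (∏ ℓ ∈ univ.filter fun ℓ => t ℓ = v, χ ℓ (g v))⁻¹ := by
      intro v; simp [gaussMap]
    simp only [h1, h2, Finset.prod_mul_distrib, Finset.prod_inv_distrib,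
      fiber_prod s g χ, fiber_prod t g χ]
    group
    ac_rfl
  simp only [Function.comp_apply, Ugauge, Wline, Pi.smul_apply, smul_smul, key]
  push_cast
  ring_nf
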